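/- Let k ≥ 2 and n ≥ 2k be integers. Let G be the complete graph on vertex set {1,…,n}, edge-colored so that each edge with both endpoints in {1,…,2k−3} receives its own distinct color, and all remaining edges receive one single common color different from all the others. Then c(G) = C(2k−3,2) + 1, so e(G) + c(G) = C(n,2) + C(2k−3,2) + 1, and G contains no rainbow matching of size k. -/
import Mathlib


/-- `G` (with edge-coloring `c`) contains a rainbow matching of size `k`:
`k` pairwise vertex-disjoint edges of `G` with pairwise distinct colors. -/
def HasRainbowMatching {V α : Type*} (G : SimpleGraph V) (c : Sym2 V → α) (k : ℕ) : Prop :=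
  ∃ M : Finset (Sym2 V), M.card = k ∧ ↑M ⊆ G.edgeSet ∧
    (∀ e ∈ M, ∀ f ∈ M, e ≠ f → ∀ v : V, v ∈ e → v ∉ f) ∧
    Set.InjOn c ↑M

lemma top_edgeSet_ncard (N : ℕ) :
    ((⊤ : SimpleGraph (Fin N)).edgeSet).ncard = N.choose 2 := by
  classical
  rw [← SimpleGraph.coe_edgeFinset, Set.ncard_coe_finset,
    SimpleGraph.card_edgeFinset_top_eq_card_choose_two, Fintype.card_fin]

/-- Construction II: let `k ≥ 2`, `n ≥ 2k`, and color the complete graph on `Fin n` so that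
every edge with both endpoints among the first `2k-3` vertices gets its own distinct color
(all different from a fixed color `c0`) and all remaining edges get the common color `c0`.
Then `c(G) = C(2k-3,2) + 1`, hence `e(G) + c(G) = C(n,2) + C(2k-3,2) + 1`, and there is no
rainbow matching of size `k`. -/
theorem constructionII
    {α : Type*} (k n : ℕ) (hk : 2 ≤ k) (hn : 2 * k ≤ n)
    (c : Sym2 (Fin n) → α) (c0 : α)
    (hinj : ∀ e ∈ (⊤ : SimpleGraph (Fin n)).edgeSet, ∀ f ∈ (⊤ : SimpleGraph (Fin n)).edgeSet,
      (∀ v ∈ e, (v : ℕ) < 2 * k - 3) → (∀ v ∈ f, (v : ℕ) < 2 * k - 3) → c e = c f → e = f)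
    (hne : ∀ e ∈ (⊤ : SimpleGraph (Fin n)).edgeSet,
      (∀ v ∈ e, (v : ℕ) < 2 * k - 3) → c e ≠ c0)
    (hc0 : ∀ e ∈ (⊤ : SimpleGraph (Fin n)).edgeSet,
      (∃ v ∈ e, 2 * k - 3 ≤ (v : ℕ)) → c e = c0) :
    (c '' (⊤ : SimpleGraph (Fin n)).edgeSet).ncard = (2 * k - 3).choose 2 + 1 ∧
    (⊤ : SimpleGraph (Fin n)).edgeSet.ncard + (c '' (⊤ : SimpleGraph (Fin n)).edgeSet).ncard
        = n.choose 2 + ((2 * k - 3).choose 2 + 1) ∧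
    ¬ HasRainbowMatching (⊤ : SimpleGraph (Fin n)) c k := by
  classical
  set m := 2 * k - 3 with hm
  have hmn : m ≤ n := by omega
  -- edge set membership characterization
  have hedge : ∀ a b : Fin n, s(a, b) ∈ (⊤ : SimpleGraph (Fin n)).edgeSet ↔ a ≠ b := by
    intro a b; simp [SimpleGraph.mem_edgeSet]
  -- The set of "special" edges
  set A : Set (Sym2 (Fin n)) :=
    {e | e ∈ (⊤ : SimpleGraph (Fin n)).edgeSet ∧ ∀ v ∈ e, (v : ℕ) < m} with hA
  have hAsub : A ⊆ (⊤ : SimpleGraph (Fin n)).edgeSet := fun e he => he.1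
  set f : Fin m → Fin n := Fin.castLE hmn with hf
  have hfinj : Function.Injective f := Fin.castLE_injective hmn
  have hAeq : A = Sym2.map f '' (⊤ : SimpleGraph (Fin m)).edgeSet := by
    ext e
    induction e using Sym2.ind with
    | _ a b =>
      constructor
      · rintro ⟨hab, hlt⟩
        rw [hedge] at hab
        have ha : (a : ℕ) < m := hlt a (by simp)
        have hb : (b : ℕ) < m := hlt b (by simp)
        refine ⟨s(⟨a, ha⟩, ⟨b, hb⟩), ?_, ?_⟩
        · rw [SimpleGraph.mem_edgeSet]
          simp only [SimpleGraph.top_adj, ne_eq]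
          intro h
          apply hab
          have := congrArg Fin.val h
          exact Fin.ext this
        · simp [Sym2.map_pair_eq, hf, Fin.castLE]
      · rintro ⟨e', he', heq⟩
        induction e' using Sym2.ind with
        | _ x y =>
          rw [SimpleGraph.mem_edgeSet] at he'
          simp only [SimpleGraph.top_adj, ne_eq] at he'
          rw [Sym2.map_pair_eq] at heq
          constructor
          · rw [← heq, hedge]
            exact fun h => he' (hfinj h)
          · rw [← heq]
            intro v hv
            rcases Sym2.mem_iff.1 hv with h | h <;> subst h <;>
              simp [hf, Fin.castLE]
  have hAfin : A.Finite := Set.toFinite A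
  have hAcard : A.ncard = m.choose 2 := by
    rw [hAeq, Set.ncard_image_of_injective _ (Sym2.map.injective hfinj),
      top_edgeSet_ncard]
  -- the color image
  have hvm : (m : ℕ) < n := by omega
  have hvm1 : m + 1 < n := by omega
  have he0 : s((⟨m, hvm⟩ : Fin n), (⟨m + 1, hvm1⟩ : Fin n)) ∈
      (⊤ : SimpleGraph (Fin n)).edgeSet := by
    rw [hedge]
    intro h
    have := congrArg Fin.val h
    simp at this
  have hce0 : c s((⟨m, hvm⟩ : Fin n), (⟨m + 1, hvm1⟩ : Fin n)) = c0 := by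
    apply hc0 _ he0
    exact ⟨⟨m, hvm⟩, by simp, le_refl m⟩
  have himg : c '' (⊤ : SimpleGraph (Fin n)).edgeSet = insert c0 (c '' A) := by
    ext x
    constructor
    · rintro ⟨e, he, rfl⟩
      by_cases h : ∀ v ∈ e, (v : ℕ) < m
      · exact Set.mem_insert_of_mem _ ⟨e, ⟨he, h⟩, rfl⟩
      · push_neg at h
        obtain ⟨v, hv, hvm'⟩ := h
        rw [hc0 e he ⟨v, hv, hvm'⟩]
        exact Set.mem_insert _ _
    · rintro (rfl | ⟨e, he, rfl⟩)
      · exact ⟨_, he0, hce0⟩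
      · exact ⟨e, hAsub he, rfl⟩
  have hc0not : c0 ∉ c '' A := by
    rintro ⟨e, he, heq⟩
    exact hne e he.1 he.2 heq
  have hncardA : (c '' A).ncard = m.choose 2 := by
    rw [Set.ncard_image_of_injOn, hAcard]
    intro e he f hf heq
    exact hinj e (hAsub he) f (hAsub hf) he.2 hf.2 heq
  have hcolors : (c '' (⊤ : SimpleGraph (Fin n)).edgeSet).ncard = m.choose 2 + 1 := by
    rw [himg, Set.ncard_insert_of_notMem hc0not (hAfin.image c), hncardA]
  refine ⟨hcolors, ?_, ?_⟩
  · rw [hcolors, top_edgeSet_ncard]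
  · rintro ⟨M, hcard, hsub, hdisj, hinjM⟩
    -- at most one edge of M has color c0
    have h1 : (M.filter (fun e => c e = c0)).card ≤ 1 := by
      apply Finset.card_le_one.2
      intro a ha b hb
      simp only [Finset.mem_filter] at ha hb
      exact hinjM ha.1 hb.1 (ha.2.trans hb.2.symm)
    set M' := M.filter (fun e => ¬ c e = c0) with hM'
    have hM'card : k - 1 ≤ M'.card := by
      have h2 : (M.filter (fun e => c e = c0)).card + M'.card = M.card := by
        rw [hM']
        exact Finset.card_filter_add_card_filter_not _
      omega
    -- every edge of M' has both endpoints < m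
    have hM'lt : ∀ e ∈ M', ∀ v ∈ e, (v : ℕ) < m := by
      intro e he v hv
      simp only [hM', Finset.mem_filter] at he
      by_contra h
      exact he.2 (hc0 e (hsub he.1) ⟨v, hv, le_of_not_gt h⟩)
    -- count vertices
    set T : Finset (Fin n) := M'.biUnion (fun e => Finset.univ.filter (fun v => v ∈ e)) with hT
    have hTcard : T.card = 2 * M'.card := by
      rw [hT, Finset.card_biUnion]
      · have : ∀ e ∈ M', (Finset.univ.filter (fun v => v ∈ e)).card = 2 := by
          intro e he
          have heE : e ∈ (⊤ : SimpleGraph (Fin n)).edgeSet :=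
            hsub (Finset.mem_filter.1 he).1
          induction e using Sym2.ind with
          | _ a b =>
            rw [hedge] at heE
            have : Finset.univ.filter (fun v => v ∈ s(a,b)) = {a, b} := by
              ext v; simp [Sym2.mem_iff]
            rw [this, Finset.card_insert_of_notMem (by simpa using heE),
              Finset.card_singleton]
        rw [Finset.sum_congr rfl this, Finset.sum_const, smul_eq_mul, mul_comm]
      · intro e he f hf hef
        simp only [Finset.disjoint_left, Finset.mem_filter]
        rintro v ⟨-, hv⟩ ⟨-, hv'⟩
        exact hdisj e (Finset.mem_filter.1 he).1 f (Finset.mem_filter.1 hf).1 hef v hv hv'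
    have hTsub : T ⊆ Finset.univ.filter (fun v : Fin n => (v : ℕ) < m) := by
      intro v hv
      simp only [hT, Finset.mem_biUnion, Finset.mem_filter] at hv ⊢
      obtain ⟨e, he, -, hve⟩ := hv
      exact ⟨Finset.mem_univ v, hM'lt e he v hve⟩
    have hfiltcard : (Finset.univ.filter (fun v : Fin n => (v : ℕ) < m)).card = m := by
      have : Finset.univ.filter (fun v : Fin n => (v : ℕ) < m) = Finset.univ.image f := by
        ext v
        simp only [Finset.mem_filter, Finset.mem_image, Finset.mem_univ, true_and]
        constructor
        · intro h
          exact ⟨⟨v, h⟩, Fin.ext rfl⟩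
        · rintro ⟨x, rfl⟩
          exact x.2
      rw [this, Finset.card_image_of_injective _ hfinj, Finset.card_univ, Fintype.card_fin]
    have := Finset.card_le_card hTsub
    rw [hTcard, hfiltcard] at this
    omega
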